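/- Let A, B ∈ M_m(ℂ) be traceless Hermitian matrices, Δ = A − B, P₊ the projector onto the strictly positive eigenspace of Δ, P₀ the projector onto the kernel of Δ, and E₀ Hermitian with 0 ≤ E₀ ≤ P₀. Assume Tr((P₊ + E₀) A) ≥ Tr((P₊ + E₀) B) ≥ 0. Then the map λ_cg(X) = Tr((P₊ + E₀) X) |0⟩⟨0| + Tr((I − P₊ − E₀) X) |1⟩⟨1| satisfies ‖λ_cg(A)‖₁ − ‖λ_cg(B)‖₁ = ‖λ_cg(A − B)‖₁ = ‖A − B‖₁. -/

import Mathlib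

open scoped ComplexOrder

/-- The trace norm (Schatten 1-norm) of a complex matrix: `‖A‖₁ = Tr √(Aᴴ A)`. -/
noncomputable def traceNorm {m : Type*} [Fintype m] [DecidableEq m]
    (A : Matrix m m ℂ) : ℝ :=
  ((((Matrix.posSemidef_conjTranspose_mul_self A).1.eigenvectorUnitary : Matrix m m ℂ) *
      Matrix.diagonal (fun i => ((√((Matrix.posSemidef_conjTranspose_mul_self A).1.eigenvalues i)
        : ℝ) : ℂ)) *
      (star (Matrix.posSemidef_conjTranspose_mul_self A).1.eigenvectorUnitary :
        Matrix m m ℂ)).trace).re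

/-- `P` is the orthogonal projector onto the support (range) of the Hermitian matrix `Q`. -/
def IsSupportProjection {d : Type*} [Fintype d]
    (P Q : Matrix d d ℂ) : Prop :=
  P.IsHermitian ∧ P * P = P ∧ P * Q = Q ∧
    ∀ v : d → ℂ, Q.mulVec v = 0 → P.mulVec v = 0

/-- The coarse-graining (measurement) map
`λ_cg(X) = Tr(F X) |0⟩⟨0| + Tr((I − F) X) |1⟩⟨1|`, where `F = P₊ + E₀` and
`|0⟩, |1⟩` are two fixed orthonormal vectors of `ℂ^d`. -/
noncomputable def lamCG {m d : ℕ} (F : Matrix (Fin m) (Fin m) ℂ) (e0 e1 : Fin d → ℂ)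
    (X : Matrix (Fin m) (Fin m) ℂ) : Matrix (Fin d) (Fin d) ℂ :=
  ((F * X).trace) • Matrix.vecMulVec e0 (star e0) +
    (((1 - F) * X).trace) • Matrix.vecMulVec e1 (star e1)

section AuxLemmas
open Matrix

lemma mulvv {n : Type*} [Fintype n] (a b c e : n → ℂ) :
    vecMulVec a b * vecMulVec c e = (b ⬝ᵥ c) • vecMulVec a e := by
  ext i j
  simp only [Matrix.mul_apply, vecMulVec_apply, Matrix.smul_apply, dotProduct, smul_eq_mul,
    Finset.sum_mul]
  exact Finset.sum_congr rfl fun k _ => by ring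

open scoped MatrixOrder in
lemma eq_sqrt_expr {n : Type*} [Fintype n] [DecidableEq n] {M N : Matrix n n ℂ}
    (hN : N.PosSemidef) (h : N ^ 2 = Mᴴ * M) :
    N = ((posSemidef_conjTranspose_mul_self M).1.eigenvectorUnitary : Matrix n n ℂ) *
      diagonal (fun i => ((√((posSemidef_conjTranspose_mul_self M).1.eigenvalues i) : ℝ) : ℂ)) *
      (star (posSemidef_conjTranspose_mul_self M).1.eigenvectorUnitary : Matrix n n ℂ) := by
  have hM := posSemidef_conjTranspose_mul_self M
  have e : CFC.sqrt (Mᴴ * M) = ((posSemidef_conjTranspose_mul_self M).1.eigenvectorUnitary : Matrix n n ℂ) *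
      diagonal (fun i => ((√((posSemidef_conjTranspose_mul_self M).1.eigenvalues i) : ℝ) : ℂ)) *
      (star (posSemidef_conjTranspose_mul_self M).1.eigenvectorUnitary : Matrix n n ℂ) := by
    rw [CFC.sqrt_eq_cfc, cfc_nnreal_eq_real _ (Mᴴ * M), hM.1.cfc_eq]
    rw [IsHermitian.cfc, Unitary.conjStarAlgAut_apply]
    have hf : (RCLike.ofReal ∘ (fun x : ℝ => ((NNReal.sqrt x.toNNReal : NNReal) : ℝ)) ∘
        hM.1.eigenvalues : n → ℂ) = fun i => ((√(hM.1.eigenvalues i) : ℝ) : ℂ) := by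
      funext i
      simp only [Function.comp_apply, Real.coe_sqrt, Real.coe_toNNReal _ (hM.eigenvalues_nonneg i)]
      rfl
    rw [hf]
  rw [← e]
  exact (CFC.sqrt_unique (a := Mᴴ * M) (b := N) (by rw [← h, sq]) hN.nonneg).symm

lemma psd_vv {n : Type*} [Fintype n] [DecidableEq n] (v : n → ℂ) :
    (vecMulVec v (star v)).PosSemidef := by
  have h : vecMulVec v (star v) = replicateCol Unit v * (replicateCol Unit v)ᴴ := by
    rw [conjTranspose_replicateCol, vecMulVec_eq Unit]
  rw [h]
  exact posSemidef_self_mul_conjTranspose _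

lemma trace_vv {n : Type*} [Fintype n] [DecidableEq n] (v : n → ℂ)
    (hv : ∑ x, (starRingEnd ℂ) (v x) * v x = 1) :
    (vecMulVec v (star v)).trace = 1 := by
  rw [← hv]
  simp only [Matrix.trace, Matrix.diag, vecMulVec_apply, Pi.star_apply]
  exact Finset.sum_congr rfl fun k _ => mul_comm _ _

lemma psd_smul {n : Type*} [Fintype n] [DecidableEq n] {N : Matrix n n ℂ}
    (hN : N.PosSemidef) {c : ℂ} (hc : 0 ≤ c) : (c • N).PosSemidef := by
  have hcr : (starRingEnd ℂ) c = c := by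
    rw [Complex.conj_eq_iff_im]
    exact (Complex.nonneg_iff.mp hc).2.symm
  refine PosSemidef.of_dotProduct_mulVec_nonneg ?_ ?_
  · rw [IsHermitian, conjTranspose_smul, hN.1, show star c = c from hcr]
  · intro x
    rw [smul_mulVec, dotProduct_smul, smul_eq_mul]
    exact mul_nonneg hc (hN.dotProduct_mulVec_nonneg x)

lemma tn_pair {d : ℕ} {e0 e1 : Fin d → ℂ}
    (he0 : ∑ x : Fin d, (starRingEnd ℂ) (e0 x) * e0 x = 1)
    (he1 : ∑ x : Fin d, (starRingEnd ℂ) (e1 x) * e1 x = 1)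
    (he01 : ∑ x : Fin d, (starRingEnd ℂ) (e0 x) * e1 x = 0)
    (c : ℂ) (hc : 0 ≤ c) :
    traceNorm (c • vecMulVec e0 (star e0) + (-c) • vecMulVec e1 (star e1)) = 2 * c.re := by
  set P0 := vecMulVec e0 (star e0) with hP0def
  set P1 := vecMulVec e1 (star e1) with hP1def
  set M := c • P0 + (-c) • P1 with hMdef
  have hcr : (starRingEnd ℂ) c = c := by
    rw [Complex.conj_eq_iff_im]; exact (Complex.nonneg_iff.mp hc).2.symm
  have hd00 : (star e0) ⬝ᵥ e0 = 1 := he0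
  have hd11 : (star e1) ⬝ᵥ e1 = 1 := he1
  have hd01 : (star e0) ⬝ᵥ e1 = 0 := he01
  have hd10 : (star e1) ⬝ᵥ e0 = 0 := by
    have h := congrArg star hd01
    rw [star_zero] at h
    rw [← h]
    simp only [dotProduct, star_sum, star_mul', star_star, Pi.star_apply]
    exact Finset.sum_congr rfl fun k _ => mul_comm _ _
  have h00 : P0 * P0 = P0 := by rw [hP0def, mulvv, hd00, one_smul]
  have h11 : P1 * P1 = P1 := by rw [hP1def, mulvv, hd11, one_smul]
  have h01 : P0 * P1 = 0 := by rw [hP0def, hP1def, mulvv, hd01, zero_smul]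
  have h10 : P1 * P0 = 0 := by rw [hP0def, hP1def, mulvv, hd10, zero_smul]
  have hP0h : P0ᴴ = P0 := (psd_vv e0).1
  have hP1h : P1ᴴ = P1 := (psd_vv e1).1
  have hstar : star c = c := hcr
  have hsq : (c • (P0 + P1)) ^ 2 = Mᴴ * M := by
    rw [pow_two, hMdef]
    simp only [conjTranspose_add, conjTranspose_smul, conjTranspose_neg, hP0h, hP1h,
      star_neg, hstar, neg_smul, add_mul, mul_add, neg_mul, mul_neg, neg_neg,
      smul_mul_assoc, mul_smul_comm, h00, h11, h01, h10, smul_smul, smul_zero,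
      neg_zero, add_zero, zero_add, smul_add]
    module
  have hpsd : (c • (P0 + P1)).PosSemidef := psd_smul ((psd_vv e0).add (psd_vv e1)) hc
  have hsqrt := eq_sqrt_expr hpsd hsq
  rw [traceNorm, ← hsqrt, trace_smul, trace_add, trace_vv e0 he0, trace_vv e1 he1]
  simp [Complex.mul_re]
  ring

lemma mul_eq_zero_of_ker {n : Type*} [Fintype n]
    {P Q R : Matrix n n ℂ} (h : ∀ v, Q.mulVec v = 0 → P.mulVec v = 0)
    (hQR : Q * R = 0) : P * R = 0 := by
  ext i j
  have hv : Q.mulVec (fun k => R k j) = 0 := by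
    funext i'
    have := congrFun (congrFun hQR i') j
    simpa [Matrix.mul_apply, Matrix.mulVec, dotProduct] using this
  have := congrFun (h _ hv) i
  simpa [Matrix.mul_apply, Matrix.mulVec, dotProduct] using this

lemma psd_mul_zero_of_le {n : Type*} [Fintype n]
    {E P R : Matrix n n ℂ} (hE : E.PosSemidef) (hPE : (P - E).PosSemidef)
    (hPR : P * R = 0) : E * R = 0 := by
  refine mul_eq_zero_of_ker (fun v hv => ?_) hPR
  have h1 : star v ⬝ᵥ E.mulVec v + star v ⬝ᵥ (P - E).mulVec v = 0 := by
    rw [← dotProduct_add, ← Matrix.add_mulVec, add_sub_cancel, hv, dotProduct_zero]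
  have hle : star v ⬝ᵥ E.mulVec v ≤ 0 := by
    rw [add_eq_zero_iff_eq_neg.mp h1]
    exact neg_nonpos.mpr (hPE.dotProduct_mulVec_nonneg v)
  have h2 : star v ⬝ᵥ E.mulVec v = 0 := le_antisymm hle (hE.dotProduct_mulVec_nonneg v)
  exact (hE.dotProduct_mulVec_zero_iff v).mp h2

end AuxLemmas

/-- let `A, B` be traceless Hermitian matrices, `Δ = A − B` with Jordan
decomposition `Δ = Δ₊ − Δ₋`, `P₊` the projector onto the strictly positive eigenspace of
`Δ`, `P₀` the projector onto its kernel, and `E₀` Hermitian with `0 ≤ E₀ ≤ P₀`. If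
`Tr((P₊+E₀)A) ≥ Tr((P₊+E₀)B) ≥ 0`, then the map
`λ_cg(X) = Tr((P₊+E₀)X)|0⟩⟨0| + Tr((I−P₊−E₀)X)|1⟩⟨1|` satisfies
`‖λ_cg(A)‖₁ − ‖λ_cg(B)‖₁ = ‖λ_cg(A − B)‖₁ = ‖A − B‖₁`. -/
theorem lamCG_saturates_general_bound
    {m d : ℕ} (hd : 2 ≤ d)
    (A B : Matrix (Fin m) (Fin m) ℂ)
    (hA : A.IsHermitian) (hB : B.IsHermitian)
    (hAtr : A.trace = 0) (hBtr : B.trace = 0)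
    (Δp Δm : Matrix (Fin m) (Fin m) ℂ)
    (hΔp : Δp.PosSemidef) (hΔm : Δm.PosSemidef)
    (hJordan : A - B = Δp - Δm) (horth : Δp * Δm = 0)
    (Pp Pm : Matrix (Fin m) (Fin m) ℂ)
    (hPp : IsSupportProjection Pp Δp) (hPm : IsSupportProjection Pm Δm)
    (P0 : Matrix (Fin m) (Fin m) ℂ) (hP0 : P0 = 1 - Pp - Pm)
    (E₀ : Matrix (Fin m) (Fin m) ℂ) (hE₀herm : E₀.IsHermitian)
    (hE₀pos : E₀.PosSemidef) (hE₀le : (P0 - E₀).PosSemidef)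
    (e0 e1 : Fin d → ℂ)
    (he0 : ∑ x : Fin d, (starRingEnd ℂ) (e0 x) * e0 x = 1)
    (he1 : ∑ x : Fin d, (starRingEnd ℂ) (e1 x) * e1 x = 1)
    (he01 : ∑ x : Fin d, (starRingEnd ℂ) (e0 x) * e1 x = 0)
    (hTrB : 0 ≤ (((Pp + E₀) * B).trace))
    (hTrAB : (((Pp + E₀) * B).trace) ≤ (((Pp + E₀) * A).trace)) :
    traceNorm (lamCG (Pp + E₀) e0 e1 A) - traceNorm (lamCG (Pp + E₀) e0 e1 B)
        = traceNorm (lamCG (Pp + E₀) e0 e1 (A - B)) ∧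
    traceNorm (lamCG (Pp + E₀) e0 e1 (A - B)) = traceNorm (A - B) := by
  have hΔmΔp : Δm * Δp = 0 := by
    have h := congrArg Matrix.conjTranspose horth
    rwa [Matrix.conjTranspose_mul, hΔp.1, hΔm.1, Matrix.conjTranspose_zero] at h
  have hPpΔp : Pp * Δp = Δp := hPp.2.2.1
  have hPmΔm : Pm * Δm = Δm := hPm.2.2.1
  have hPpΔm : Pp * Δm = 0 := mul_eq_zero_of_ker hPp.2.2.2 horth
  have hPmΔp : Pm * Δp = 0 := mul_eq_zero_of_ker hPm.2.2.2 hΔmΔp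
  have hP0Δp : P0 * Δp = 0 := by
    rw [hP0, sub_mul, sub_mul, one_mul, hPpΔp, hPmΔp, sub_zero, sub_self]
  have hP0Δm : P0 * Δm = 0 := by
    rw [hP0, sub_mul, sub_mul, one_mul, hPpΔm, hPmΔm, sub_zero, sub_self]
  have hEΔp : E₀ * Δp = 0 := psd_mul_zero_of_le hE₀pos hE₀le hP0Δp
  have hEΔm : E₀ * Δm = 0 := psd_mul_zero_of_le hE₀pos hE₀le hP0Δm
  have hFΔ : (Pp + E₀) * (A - B) = Δp := by
    rw [hJordan, mul_sub, add_mul, add_mul, hPpΔp, hPpΔm, hEΔp, hEΔm, add_zero, add_zero]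
    simp
  have htA : 0 ≤ ((Pp + E₀) * A).trace := le_trans hTrB hTrAB
  have htD : 0 ≤ ((Pp + E₀) * (A - B)).trace := by
    rw [mul_sub, Matrix.trace_sub]
    exact sub_nonneg.mpr hTrAB
  have h1F : ∀ X : Matrix (Fin m) (Fin m) ℂ, X.trace = 0 →
      ((1 - (Pp + E₀)) * X).trace = -(((Pp + E₀) * X).trace) := by
    intro X hX
    rw [sub_mul, one_mul, Matrix.trace_sub, hX, zero_sub]
  have hABtr : (A - B).trace = 0 := by rw [Matrix.trace_sub, hAtr, hBtr, sub_zero]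
  have tnA : traceNorm (lamCG (Pp + E₀) e0 e1 A) = 2 * (((Pp + E₀) * A).trace).re := by
    rw [lamCG, h1F A hAtr]
    exact tn_pair he0 he1 he01 _ htA
  have tnB : traceNorm (lamCG (Pp + E₀) e0 e1 B) = 2 * (((Pp + E₀) * B).trace).re := by
    rw [lamCG, h1F B hBtr]
    exact tn_pair he0 he1 he01 _ hTrB
  have tnD : traceNorm (lamCG (Pp + E₀) e0 e1 (A - B))
      = 2 * (((Pp + E₀) * (A - B)).trace).re := by
    rw [lamCG, h1F (A - B) hABtr]
    exact tn_pair he0 he1 he01 _ htD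
  have hΔherm : (A - B).conjTranspose = A - B := by
    rw [hJordan, Matrix.conjTranspose_sub, hΔp.1, hΔm.1]
  have hsq2 : (Δp + Δm) ^ 2 = (A - B).conjTranspose * (A - B) := by
    rw [hΔherm, hJordan, pow_two, add_mul, mul_add, mul_add, horth, hΔmΔp, add_zero, zero_add,
      sub_mul, mul_sub, mul_sub, horth, hΔmΔp, sub_zero, zero_sub, sub_neg_eq_add]
  have hsqrtΔ := eq_sqrt_expr
    (hΔp.add hΔm) hsq2
  have tnAB : traceNorm (A - B) = ((Δp + Δm).trace).re := by
    rw [traceNorm, ← hsqrtΔ]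
  have hΔmtr : Δm.trace = Δp.trace := by
    have h : Δp.trace - Δm.trace = 0 := by
      rw [← Matrix.trace_sub, ← hJordan, hABtr]
    exact (sub_eq_zero.mp h).symm
  have htsub : ((Pp + E₀) * (A - B)).trace = Δp.trace := by rw [hFΔ]
  constructor
  · rw [tnA, tnB, tnD, mul_sub, Matrix.trace_sub, Complex.sub_re]
    ring
  · rw [tnD, tnAB, htsub, Matrix.trace_add, hΔmtr, Complex.add_re]
    ring
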